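/- Let n ≥ 4, let β ∈ PB_n be a Brunnian braid, and let i,j,k ∈ {1,…,n} be distinct. Then w_{(i,j,k)}(φ_n(β)) = 1 in F_n^3, where the invariant is evaluated on any good-condition word representing φ_n(β). In particular, the MN-invariants w_{(i,j,k)} vanish on images of all Brunnian braids. -/

import Mathlib

namespace GnkBrunnian

/-! ## Index types for generators -/

/-- Validity of a pair index: `1 ≤ i < j ≤ n`. -/
abbrev P2ok (n : ℕ) (p : ℕ × ℕ) : Prop := 1 ≤ p.1 ∧ p.1 < p.2 ∧ p.2 ≤ n

/-- Index type for the generators `a_{ij}` of `G_n^2` (and `b_{ij}` of `PB_n`). -/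
abbrev PIdx (n : ℕ) := {p : ℕ × ℕ // P2ok n p}

/-- Validity of a triple index: `1 ≤ i < j < k ≤ n`. -/
abbrev T3ok (n : ℕ) (t : ℕ × ℕ × ℕ) : Prop :=
  1 ≤ t.1 ∧ t.1 < t.2.1 ∧ t.2.1 < t.2.2 ∧ t.2.2 ≤ n

/-- Index type for the generators `a_{ijk}` of `G_n^3`. -/
abbrev TIdx (n : ℕ) := {t : ℕ × ℕ × ℕ // T3ok n t}

def sort2 (a b : ℕ) : ℕ × ℕ := (min a b, max a b)

def sort3 (a b c : ℕ) : ℕ × ℕ × ℕ :=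
  (min a (min b c), a + b + c - min a (min b c) - max a (max b c), max a (max b c))

def pairSet {n : ℕ} (p : PIdx n) : Finset ℕ := {p.1.1, p.1.2}

def tripSet {n : ℕ} (t : TIdx n) : Finset ℕ := {t.1.1, t.1.2.1, t.1.2.2}

/-- Reindexing after deleting the strand `m` : indices above `m` are decreased by one. -/
def del (m x : ℕ) : ℕ := if m < x then x - 1 else x

/-! ## The group `G_n^2` -/

/-- The free-group letter `a_{\{a,b\}}` (trivial if the index is out of range). -/
def fgen2 (n a b : ℕ) : FreeGroup (PIdx n) :=
  if h : P2ok n (sort2 a b) then FreeGroup.of ⟨sort2 a b, h⟩ else 1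

/-- The defining relators of `G_n^2`. -/
def rels2 (n : ℕ) : Set (FreeGroup (PIdx n)) :=
  {r | ∃ a : PIdx n, r = .of a * .of a} ∪
  {r | ∃ i j k l : ℕ,
      1 ≤ i ∧ i ≤ n ∧ 1 ≤ j ∧ j ≤ n ∧ 1 ≤ k ∧ k ≤ n ∧ 1 ≤ l ∧ l ≤ n ∧
      i ≠ j ∧ i ≠ k ∧ i ≠ l ∧ j ≠ k ∧ j ≠ l ∧ k ≠ l ∧
      r = fgen2 n i j * fgen2 n k l * (fgen2 n i j)⁻¹ * (fgen2 n k l)⁻¹} ∪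
  {r | ∃ i j k : ℕ,
      1 ≤ i ∧ i ≤ n ∧ 1 ≤ j ∧ j ≤ n ∧ 1 ≤ k ∧ k ≤ n ∧ i ≠ j ∧ i ≠ k ∧ j ≠ k ∧
      r = fgen2 n i j * fgen2 n i k * fgen2 n j k *
          (fgen2 n j k * fgen2 n i k * fgen2 n i j)⁻¹}

/-- The group `G_n^2`. -/
abbrev G2 (n : ℕ) := PresentedGroup (rels2 n)

/-- The generator `a_{\{a,b\}}` of `G_n^2` (trivial if the index is out of range). -/
def ggen2 (n a b : ℕ) : G2 n :=
  if h : P2ok n (sort2 a b) then PresentedGroup.of ⟨sort2 a b, h⟩ else 1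

/-- The element of `G_n^2` represented by a word in the generators. -/
def toG2 {n : ℕ} (β : List (PIdx n)) : G2 n :=
  (β.map fun a => (PresentedGroup.of a : G2 n)).prod

/-! ## The group `G_n^3` -/

/-- The free-group letter `a_{\{a,b,c\}}` (trivial if the index is out of range). -/
def fgen3 (n a b c : ℕ) : FreeGroup (TIdx n) :=
  if h : T3ok n (sort3 a b c) then FreeGroup.of ⟨sort3 a b c, h⟩ else 1

/-- The defining relators of `G_n^3`. -/
def rels3 (n : ℕ) : Set (FreeGroup (TIdx n)) :=
  {r | ∃ a : TIdx n, r = .of a * .of a} ∪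
  {r | ∃ a b : TIdx n, (tripSet a ∩ tripSet b).card < 2 ∧
      r = .of a * .of b * (.of a)⁻¹ * (.of b)⁻¹} ∪
  {r | ∃ i j k l : ℕ,
      1 ≤ i ∧ i ≤ n ∧ 1 ≤ j ∧ j ≤ n ∧ 1 ≤ k ∧ k ≤ n ∧ 1 ≤ l ∧ l ≤ n ∧
      i ≠ j ∧ i ≠ k ∧ i ≠ l ∧ j ≠ k ∧ j ≠ l ∧ k ≠ l ∧
      r = fgen3 n i j k * fgen3 n i j l * fgen3 n i k l * fgen3 n j k l *
          (fgen3 n j k l * fgen3 n i k l * fgen3 n i j l * fgen3 n i j k)⁻¹}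

/-- The group `G_n^3`. -/
abbrev G3 (n : ℕ) := PresentedGroup (rels3 n)

/-- The generator `a_{\{a,b,c\}}` of `G_n^3` (trivial if the index is out of range). -/
def ggen3 (n a b c : ℕ) : G3 n :=
  if h : T3ok n (sort3 a b c) then PresentedGroup.of ⟨sort3 a b c, h⟩ else 1

/-- The element of `G_n^3` represented by a word in the generators. -/
def toG3 {n : ℕ} (β : List (TIdx n)) : G3 n :=
  (β.map fun a => (PresentedGroup.of a : G3 n)).prod

/-! ## The pure braid group `PB_n` (standard Artin/Birman presentation) -/

/-- The defining relators of the pure braid group on `n` strands, in the standard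
presentation on the generators `b_{ij} = A_{ij}`, `1 ≤ i < j ≤ n`. -/
def relsPB (n : ℕ) : Set (FreeGroup (PIdx n)) :=
  {x | ∃ r s i j : ℕ, P2ok n (r, s) ∧ P2ok n (i, j) ∧ (s < i ∨ (i < r ∧ s < j)) ∧
      x = (fgen2 n r s)⁻¹ * fgen2 n i j * fgen2 n r s * (fgen2 n i j)⁻¹} ∪
  {x | ∃ r s j : ℕ, 1 ≤ r ∧ r < s ∧ s < j ∧ j ≤ n ∧
      x = (fgen2 n r s)⁻¹ * fgen2 n s j * fgen2 n r s *
          (fgen2 n r j * fgen2 n s j * (fgen2 n r j)⁻¹)⁻¹} ∪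
  {x | ∃ r s j : ℕ, 1 ≤ r ∧ r < s ∧ s < j ∧ j ≤ n ∧
      x = (fgen2 n r s)⁻¹ * fgen2 n r j * fgen2 n r s *
          ((fgen2 n r j * fgen2 n s j) * fgen2 n r j * (fgen2 n r j * fgen2 n s j)⁻¹)⁻¹} ∪
  {x | ∃ r i s j : ℕ, 1 ≤ r ∧ r < i ∧ i < s ∧ s < j ∧ j ≤ n ∧
      x = (fgen2 n r s)⁻¹ * fgen2 n i j * fgen2 n r s *
          ((fgen2 n r j * fgen2 n s j * (fgen2 n r j)⁻¹ * (fgen2 n s j)⁻¹) * fgen2 n i j *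
           (fgen2 n r j * fgen2 n s j * (fgen2 n r j)⁻¹ * (fgen2 n s j)⁻¹)⁻¹)⁻¹}

/-- The pure braid group on `n` strands. -/
abbrev PB (n : ℕ) := PresentedGroup (relsPB n)

/-- The standard generator `b_{ij}` of `PB_n` (trivial if the index is out of range). -/
def pbgen (n a b : ℕ) : PB n :=
  if h : P2ok n (sort2 a b) then PresentedGroup.of ⟨sort2 a b, h⟩ else 1

/-! ## The elements `c^n_{i,j}` and the homomorphism `φ_n` -/

/-- `c^n_{i,j} = (∏_{k=j+1}^{n} a_{ijk}) * (∏_{k=1, k∉{i,j}}^{j-1} a_{ijk}) ∈ G_n^3`. -/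
def cElt (n i j : ℕ) : G3 n :=
  (((List.range' (j + 1) (n - j)).map fun k => ggen3 n i j k).prod) *
  (((List.range' 1 (j - 1)).map fun k => ggen3 n i j k).prod)

/-- The image of `b_{ij}` under `φ_n`:
`(c^n_{i,i+1})⁻¹ ⋯ (c^n_{i,j-1})⁻¹ (c^n_{i,j})² c^n_{i,j-1} ⋯ c^n_{i,i+1}`. -/
def phiElt (n i j : ℕ) : G3 n :=
  (((List.range' (i + 1) (j - 1 - i)).map fun m => (cElt n i m)⁻¹).prod) *
  (cElt n i j) ^ 2 *
  (((List.range' (i + 1) (j - 1 - i)).reverse.map fun m => cElt n i m).prod)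

/-- `q` is the strand-deletion homomorphism `q_m : G_n^3 → G_{n-1}^3`. -/
def IsShift3 (n m : ℕ) (q : G3 n →* G3 (n - 1)) : Prop :=
  ∀ i j k : ℕ, 1 ≤ i → i < j → j < k → k ≤ n →
    q (ggen3 n i j k) =
      if m = i ∨ m = j ∨ m = k then 1
      else ggen3 (n - 1) (del m i) (del m j) (del m k)

/-- `p` is the strand-deletion homomorphism `p_m : PB_n → PB_{n-1}`. -/
def IsShiftPB (n m : ℕ) (p : PB n →* PB (n - 1)) : Prop :=
  ∀ i j : ℕ, 1 ≤ i → i < j → j ≤ n →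
    p (pbgen n i j) =
      if m = i ∨ m = j then 1 else pbgen (n - 1) (del m i) (del m j)

/-- `φ` is the Manturov–Nikonov homomorphism `φ_n : PB_n → G_n^3`. -/
def IsPhi (n : ℕ) (φ : PB n →* G3 n) : Prop :=
  ∀ i j : ℕ, 1 ≤ i → i < j → j ≤ n → φ (pbgen n i j) = phiElt n i j

/-! ## Words and good condition -/

def good2 {n : ℕ} (β : List (PIdx n)) : Prop := ∀ a : PIdx n, Even (β.count a)

def good3 {n : ℕ} (β : List (TIdx n)) : Prop := ∀ a : TIdx n, Even (β.count a)

/-! ## Free products of copies of `ℤ/2` -/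

/-- The free product of copies of `ℤ/2ℤ` indexed by `ι`. -/
abbrev FP2 (ι : Type) := PresentedGroup {r : FreeGroup ι | ∃ a : ι, r = .of a * .of a}

/-- Indices `l ∈ {1,…,n} \ {i,j,k}`. -/
abbrev SIdx3 (n i j k : ℕ) := {l : ℕ // (1 ≤ l ∧ l ≤ n) ∧ l ≠ i ∧ l ≠ j ∧ l ≠ k}

/-- The group `F_n^3` (for the fixed triple `(i,j,k)`). -/
abbrev F3 (n i j k : ℕ) := FP2 (SIdx3 n i j k → ZMod 2 × ZMod 2)

/-- Indices `k ∈ {1,…,n} \ {i,j}`. -/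
abbrev SIdx2 (n i j : ℕ) := {l : ℕ // (1 ≤ l ∧ l ≤ n) ∧ l ≠ i ∧ l ≠ j}

/-- The group `F_n^2` (for the fixed pair `(i,j)`). -/
abbrev F2 (n i j : ℕ) := FP2 (SIdx2 n i j → ZMod 2)

/-! ## The MN-invariants `w_{(i,j)}` and `w_{(i,j,k)}` -/

/-- The number of occurrences of the generator `a_{\{a,b\}}` in a word over `G_n^2`. -/
def cnt2 {n : ℕ} (β : List (PIdx n)) (a b : ℕ) : ℕ :=
  (β.filter fun x => decide (pairSet x = ({a, b} : Finset ℕ))).length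

/-- The number of occurrences of the generator `a_{\{a,b,c\}}` in a word over `G_n^3`. -/
def cnt3 {n : ℕ} (β : List (TIdx n)) (a b c : ℕ) : ℕ :=
  (β.filter fun x => decide (tripSet x = ({a, b, c} : Finset ℕ))).length

/-- `i_c` for an occurrence of `a_{ij}` with prefix `pre`: `i_c(k) = N_{ik} + N_{jk} (mod 2)`. -/
def iC2 {n : ℕ} (i j : ℕ) (pre : List (PIdx n)) : SIdx2 n i j → ZMod 2 :=
  fun k => ((cnt2 pre i k.1 + cnt2 pre j k.1 : ℕ) : ZMod 2)

/-- The MN-invariant `w_{(i,j)}` of a word over `G_n^2`. -/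
def w2 {n : ℕ} (i j : ℕ) (β : List (PIdx n)) : F2 n i j :=
  (((β.zipIdx.map Prod.swap).filter fun x => decide (pairSet x.2 = ({i, j} : Finset ℕ))).map
    fun x => (PresentedGroup.of (iC2 i j (β.take x.1)) : F2 n i j)).prod

/-- `i_c` for an occurrence of `a_{ijk}` with prefix `pre`:
`i_c(l) = (N_{jkl} + N_{ijl}, N_{ikl} + N_{ijl}) (mod 2)`. -/
def iC3 {n : ℕ} (i j k : ℕ) (pre : List (TIdx n)) : SIdx3 n i j k → ZMod 2 × ZMod 2 :=
  fun l => (((cnt3 pre j k l.1 + cnt3 pre i j l.1 : ℕ) : ZMod 2),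
            ((cnt3 pre i k l.1 + cnt3 pre i j l.1 : ℕ) : ZMod 2))

/-- The MN-invariant `w_{(i,j,k)}` of a word over `G_n^3`. -/
def w3 {n : ℕ} (i j k : ℕ) (β : List (TIdx n)) : F3 n i j k :=
  (((β.zipIdx.map Prod.swap).filter fun x => decide (tripSet x.2 = ({i, j, k} : Finset ℕ))).map
    fun x => (PresentedGroup.of (iC3 i j k (β.take x.1)) : F3 n i j k)).prod

/-! ## Explicit words for `c^n_{i,j}` and `φ_n(b_{ij})` -/

def tripMkS (n a b c : ℕ) : Option (TIdx n) :=
  if h : T3ok n (sort3 a b c) then some ⟨sort3 a b c, h⟩ else none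

def pairMkS (n a b : ℕ) : Option (PIdx n) :=
  if h : P2ok n (sort2 a b) then some ⟨sort2 a b, h⟩ else none

/-- The defining word of `c^n_{i,j}`. -/
def cWord (n i j : ℕ) : List (TIdx n) :=
  ((List.range' (j + 1) (n - j)).filterMap fun k => tripMkS n i j k) ++
  ((List.range' 1 (j - 1)).filterMap fun k => tripMkS n i j k)

/-- The defining word of `φ_n(b_{ij})`, with the inverses of the `c`-words expanded using
`a⁻¹ = a` for generators (i.e. by reversing the words). -/
def phiWord (n i j : ℕ) : List (TIdx n) :=
  (((List.range' (i + 1) (j - 1 - i)).map fun m => (cWord n i m).reverse).flatten) ++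
  cWord n i j ++ cWord n i j ++
  (((List.range' (i + 1) (j - 1 - i)).reverse.map fun m => cWord n i m).flatten)

/-! ## The group `G_{n,p}^2` (parity) -/

/-- Index type for the generators `a_{ij}^ε` of `G_{n,p}^2`. -/
abbrev PPIdx (n : ℕ) := PIdx n × ZMod 2

def fgenP2 (n a b : ℕ) (e : ZMod 2) : FreeGroup (PPIdx n) :=
  if h : P2ok n (sort2 a b) then FreeGroup.of (⟨sort2 a b, h⟩, e) else 1

/-- The defining relators of `G_{n,p}^2`. -/
def relsP2 (n : ℕ) : Set (FreeGroup (PPIdx n)) :=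
  {r | ∃ a : PPIdx n, r = .of a * .of a} ∪
  {r | ∃ (i j k l : ℕ) (e e' : ZMod 2),
      1 ≤ i ∧ i ≤ n ∧ 1 ≤ j ∧ j ≤ n ∧ 1 ≤ k ∧ k ≤ n ∧ 1 ≤ l ∧ l ≤ n ∧
      i ≠ j ∧ i ≠ k ∧ i ≠ l ∧ j ≠ k ∧ j ≠ l ∧ k ≠ l ∧
      r = fgenP2 n i j e * fgenP2 n k l e' * (fgenP2 n i j e)⁻¹ * (fgenP2 n k l e')⁻¹} ∪
  {r | ∃ (i j k : ℕ) (e1 e2 e3 : ZMod 2),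
      1 ≤ i ∧ i < j ∧ j < k ∧ k ≤ n ∧ e1 + e2 + e3 = 0 ∧
      r = fgenP2 n i j e1 * fgenP2 n i k e2 * fgenP2 n j k e3 *
          (fgenP2 n j k e3 * fgenP2 n i k e2 * fgenP2 n i j e1)⁻¹}

/-- The group `G_{n,p}^2`. -/
abbrev GP2 (n : ℕ) := PresentedGroup (relsP2 n)

/-- The element of `G_{n,p}^2` represented by a word in the generators. -/
def toGP2 {n : ℕ} (β : List (PPIdx n)) : GP2 n :=
  (β.map fun a => (PresentedGroup.of a : GP2 n)).prod

/-! ## The parity invariant `w^p_{ij}` on `G_{n,p}^2` -/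

/-- The number of occurrences of `a_{\{a,b\}}^e` in a word over `G_{n,p}^2`. -/
def cntP2 {n : ℕ} (β : List (PPIdx n)) (a b : ℕ) (e : ZMod 2) : ℕ :=
  (β.filter fun x => decide (pairSet x.1 = ({a, b} : Finset ℕ) ∧ x.2 = e)).length

/-- `i^p_c` for an occurrence of `a_{ij}^e` with prefix `pre`. -/
def iCP2 {n : ℕ} (i j : ℕ) (e : ZMod 2) (pre : List (PPIdx n)) : SIdx2 n i j → ZMod 2 :=
  fun k =>
    if e = 0 then ((cntP2 pre i k.1 0 + cntP2 pre j k.1 0 : ℕ) : ZMod 2)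
    else ((cntP2 pre i k.1 0 + cntP2 pre j k.1 1 : ℕ) : ZMod 2)

/-- The invariant `w^p_{ij}` of a word over `G_{n,p}^2`. -/
def wP2 {n : ℕ} (i j : ℕ) (β : List (PPIdx n)) : F2 n i j :=
  (((β.zipIdx.map Prod.swap).filter fun x => decide (pairSet x.2.1 = ({i, j} : Finset ℕ))).map
    fun x => (PresentedGroup.of (iCP2 i j x.2.2 (β.take x.1)) : F2 n i j)).prod

/-! ## The map `ψ_l : G_{n+1}^2 → G_{n,p}^2` -/

/-- The word over `G_{n,p}^2` obtained from a word over `G_{n+1}^2` by deleting the strand `l`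
and recording parities. -/
def psiWord (n l : ℕ) (β : List (PIdx (n + 1))) : List (PPIdx n) :=
  (β.zipIdx.map Prod.swap).filterMap fun x =>
    if l = x.2.1.1 ∨ l = x.2.1.2 then none
    else (pairMkS n (del l x.2.1.1) (del l x.2.1.2)).map fun p =>
      (p, ((cnt2 (β.take x.1) x.2.1.1 l + cnt2 (β.take x.1) x.2.1.2 l : ℕ) : ZMod 2))

/-! ## The group `G_{n,p}^3` (parity) -/

/-- Index type for the generators `a_{ijk}^ε` of `G_{n,p}^3`. -/
abbrev TPIdx (n : ℕ) := TIdx n × ZMod 2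

def fgenP3 (n a b c : ℕ) (e : ZMod 2) : FreeGroup (TPIdx n) :=
  if h : T3ok n (sort3 a b c) then FreeGroup.of (⟨sort3 a b c, h⟩, e) else 1

/-- The defining relators of `G_{n,p}^3`. -/
def relsP3 (n : ℕ) : Set (FreeGroup (TPIdx n)) :=
  {r | ∃ a : TPIdx n, r = .of a * .of a} ∪
  {r | ∃ a b : TPIdx n, (tripSet a.1 ∩ tripSet b.1).card < 2 ∧
      r = (.of a * .of b) ^ 2} ∪
  {r | ∃ (i j k l : ℕ) (ei ej ek el : ZMod 2),
      1 ≤ i ∧ i ≤ n ∧ 1 ≤ j ∧ j ≤ n ∧ 1 ≤ k ∧ k ≤ n ∧ 1 ≤ l ∧ l ≤ n ∧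
      i ≠ j ∧ i ≠ k ∧ i ≠ l ∧ j ≠ k ∧ j ≠ l ∧ k ≠ l ∧
      (if max (max i j) (max k l) = i then ej + ek + el
       else if max (max i j) (max k l) = j then ei + ek + el
       else if max (max i j) (max k l) = k then ei + ej + el
       else ei + ej + ek) = 0 ∧
      r = (fgenP3 n i j k el * fgenP3 n i j l ek * fgenP3 n i k l ej * fgenP3 n j k l ei) ^ 2}

/-- The group `G_{n,p}^3`. -/
abbrev GP3 (n : ℕ) := PresentedGroup (relsP3 n)

/-- The element of `G_{n,p}^3` represented by a word in the generators. -/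
def toGP3 {n : ℕ} (β : List (TPIdx n)) : GP3 n :=
  (β.map fun a => (PresentedGroup.of a : GP3 n)).prod

/-! ## The map `f : G_{n+1}^3 → G_{n,p}^3` -/

/-- The word over `G_{n,p}^3` obtained from a word over `G_{n+1}^3` by deleting the letters
containing the index `n+1` and recording parities. -/
def fWord (n : ℕ) (β : List (TIdx (n + 1))) : List (TPIdx n) :=
  (β.zipIdx.map Prod.swap).filterMap fun x =>
    if x.2.1.2.2 = n + 1 then none
    else (tripMkS n x.2.1.1 x.2.1.2.1 x.2.1.2.2).map fun t =>
      (t, ((cnt3 (β.take x.1) x.2.1.2.1 x.2.1.2.2 (n + 1) +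
            cnt3 (β.take x.1) x.2.1.1 x.2.1.2.2 (n + 1) : ℕ) : ZMod 2))

/-! ## The parity invariant `w^p_{ijk}` on `G_{n,p}^3` -/

/-- The group `F_n^3` with values in `ℤ/2` (for the parity invariant). -/
abbrev F3p (n i j k : ℕ) := FP2 (SIdx3 n i j k → ZMod 2)

/-- The number of occurrences of `a_{\{a,b,c\}}^e` in a word over `G_{n,p}^3`. -/
def cntP3 {n : ℕ} (β : List (TPIdx n)) (a b c : ℕ) (e : ZMod 2) : ℕ :=
  (β.filter fun x => decide (tripSet x.1 = ({a, b, c} : Finset ℕ) ∧ x.2 = e)).length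

/-- `i^p_c` for an occurrence of `a_{ijk}^e` with prefix `pre` (here `k > i, j`). -/
def iCP3 {n : ℕ} (i j k : ℕ) (e : ZMod 2) (pre : List (TPIdx n)) : SIdx3 n i j k → ZMod 2 :=
  fun l =>
    if e = 0 then
      (if k < l.1 then
        ((cntP3 pre i k l.1 0 + cntP3 pre j k l.1 0 + cntP3 pre i j l.1 1 : ℕ) : ZMod 2)
      else ((cntP3 pre i k l.1 0 + cntP3 pre j k l.1 0 : ℕ) : ZMod 2))
    else
      (if k < l.1 then
        ((cntP3 pre i k l.1 0 + cntP3 pre j k l.1 1 + cntP3 pre i j l.1 0 : ℕ) : ZMod 2)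
      else ((cntP3 pre i k l.1 0 + cntP3 pre j k l.1 1 : ℕ) : ZMod 2))

/-- The invariant `w^p_{ijk}` of a word over `G_{n,p}^3`. -/
def wP3 {n : ℕ} (i j k : ℕ) (β : List (TPIdx n)) : F3p n i j k :=
  (((β.zipIdx.map Prod.swap).filter fun x => decide (tripSet x.2.1 = ({i, j, k} : Finset ℕ))).map
    fun x => (PresentedGroup.of (iCP3 i j k x.2.2 (β.take x.1)) : F3p n i j k)).prod

/-! ### Auxiliary development for statement_9 -/

section Aux

/-- Equality of triples of `ℕ`-finsets, arithmetized. -/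
lemma trip_eq_iff (a b c d e f : ℕ) : ({a,b,c} : Finset ℕ) = {d,e,f} ↔
    ((a=d∨a=e∨a=f)∧(b=d∨b=e∨b=f)∧(c=d∨c=e∨c=f)∧(d=a∨d=b∨d=c)∧(e=a∨e=b∨e=c)∧(f=a∨f=b∨f=c)) := by
  simp only [Finset.ext_iff, Finset.mem_insert, Finset.mem_singleton]
  constructor
  · intro h
    exact ⟨(h a).1 (Or.inl rfl), (h b).1 (Or.inr (Or.inl rfl)), (h c).1 (Or.inr (Or.inr rfl)),
      (h d).2 (Or.inl rfl), (h e).2 (Or.inr (Or.inl rfl)), (h f).2 (Or.inr (Or.inr rfl))⟩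
  · intro h x; omega

lemma sdp_ext {N G : Type*} [Group N] [Group G] {φ : G →* MulAut N} {x y : N ⋊[φ] G}
    (h1 : x.left = y.left) (h2 : x.right = y.right) : x = y := by
  cases x; cases y; cases h1; cases h2; rfl

/-- Squares of generators are trivial in `FP2`. -/
lemma FP2_of_sq {ι : Type} (x : ι) :
    (PresentedGroup.of (rels := {r : FreeGroup ι | ∃ a : ι, r = .of a * .of a}) x) *
      PresentedGroup.of x = 1 := by
  have h : (FreeGroup.of x * FreeGroup.of x) ∈
      Subgroup.normalClosure {r : FreeGroup ι | ∃ a : ι, r = .of a * .of a} :=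
    Subgroup.subset_normalClosure ⟨x, rfl⟩
  show (PresentedGroup.mk _ (FreeGroup.of x)) * PresentedGroup.mk _ (FreeGroup.of x) = 1
  rw [← map_mul]
  exact (QuotientGroup.eq_one_iff _).2 h

variable (n i j k : ℕ)

/-- The abelian group indexing the generators of `F3 n i j k`. -/
abbrev Sg := SIdx3 n i j k → ZMod 2 × ZMod 2

lemma Sg_add_self (s : Sg n i j k) : s + s = 0 := by
  funext l; exact CharTwo.add_self_eq_zero (s l)

lemma mulS_self (s : Multiplicative (Sg n i j k)) : s * s = 1 := by
  rw [← ofAdd_toAdd s, ← ofAdd_add, Sg_add_self]; rfl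

variable {n i j k} in
/-- Translation automorphism data: the homomorphism `of σ ↦ of (s + σ)`. -/
def trF (s : Sg n i j k) : F3 n i j k →* F3 n i j k :=
  PresentedGroup.toGroup (f := fun σ => PresentedGroup.of (s + σ)) (by
    rintro r ⟨a, rfl⟩
    simp only [map_mul, FreeGroup.lift_apply_of]
    exact FP2_of_sq _)

variable {n i j k} in
lemma trF_of (s σ : Sg n i j k) : trF s (.of σ) = .of (s + σ) :=
  PresentedGroup.toGroup.of _

variable {n i j k} in
lemma trF_comp (s s' : Sg n i j k) : (trF s).comp (trF s') = trF (s + s') := by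
  apply PresentedGroup.ext; intro σ
  simp only [MonoidHom.comp_apply, trF_of, add_assoc]

variable {n i j k} in
lemma trF_zero : (trF (0 : Sg n i j k)) = MonoidHom.id _ := by
  apply PresentedGroup.ext; intro σ
  simp only [trF_of, zero_add, MonoidHom.id_apply]

variable {n i j k} in
lemma trF_trF (s s' : Sg n i j k) (x : F3 n i j k) : trF s (trF s' x) = trF (s + s') x :=
  DFunLike.congr_fun (trF_comp s s') x

variable {n i j k} in
/-- Translation as a `MulEquiv`. -/
def trE (s : Sg n i j k) : F3 n i j k ≃* F3 n i j k where
  toFun := trF s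
  invFun := trF (-s)
  left_inv := fun x => by rw [trF_trF, neg_add_cancel, trF_zero]; rfl
  right_inv := fun x => by rw [trF_trF, add_neg_cancel, trF_zero]; rfl
  map_mul' := map_mul _

/-- The action of `Sg` on `F3` by translations of indices. -/
def actS : Multiplicative (Sg n i j k) →* MulAut (F3 n i j k) where
  toFun := fun s => trE s.toAdd
  map_one' := by
    apply MulEquiv.ext; intro x
    show trF 0 x = x
    rw [trF_zero]; rfl
  map_mul' := fun a b => by
    apply MulEquiv.ext; intro x
    show trF (a.toAdd + b.toAdd) x = trF a.toAdd (trF b.toAdd x)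
    rw [trF_trF]

/-- The ambient semidirect product. -/
abbrev MM := F3 n i j k ⋊[actS n i j k] Multiplicative (Sg n i j k)

variable {n i j k} in
lemma actS_apply (s : Sg n i j k) (x : F3 n i j k) :
    actS n i j k (Multiplicative.ofAdd s) x = trF s x := rfl

/-- The `S`-shift associated with a triple `T`. -/
def shF (T : Finset ℕ) : Sg n i j k := fun l =>
  ((if T = {j, k, l.1} then 1 else 0) + (if T = {i, j, l.1} then 1 else 0),
   (if T = {i, k, l.1} then 1 else 0) + (if T = {i, j, l.1} then 1 else 0))

/-- The `F3`-letter associated with a triple `T`. -/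
def gpF (T : Finset ℕ) : F3 n i j k := if T = ({i, j, k} : Finset ℕ) then .of 0 else 1

/-- The image in `MM` of the generator with triple `T`. -/
def EM (T : Finset ℕ) : MM n i j k := ⟨gpF n i j k T, Multiplicative.ofAdd (shF n i j k T)⟩

end Aux
section Aux2

variable {n i j k : ℕ}

lemma shF_A (hij : i ≠ j) (hik : i ≠ k) (hjk : j ≠ k) :
    shF n i j k ({i, j, k} : Finset ℕ) = 0 := by
  funext l
  obtain ⟨-, hli, hlj, hlk⟩ := l.2
  have h1 : ({i,j,k} : Finset ℕ) ≠ {j,k,l.1} := by rw [Ne, trip_eq_iff]; omega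
  have h2 : ({i,j,k} : Finset ℕ) ≠ {i,j,l.1} := by rw [Ne, trip_eq_iff]; omega
  have h3 : ({i,j,k} : Finset ℕ) ≠ {i,k,l.1} := by rw [Ne, trip_eq_iff]; omega
  simp [shF, h1, h2, h3, Prod.ext_iff]

lemma cardA (hij : i ≠ j) (hik : i ≠ k) (hjk : j ≠ k) : ({i, j, k} : Finset ℕ).card = 3 := by
  rw [Finset.card_insert_of_notMem (by simp [hij, hik]),
    Finset.card_insert_of_notMem (by simp [hjk])]
  rfl

lemma shF_low_inter {T : Finset ℕ} (hij : i ≠ j) (hik : i ≠ k) (hjk : j ≠ k)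
    (h : (T ∩ ({i, j, k} : Finset ℕ)).card < 2) : shF n i j k T = 0 := by
  have key : ∀ x y : ℕ, x ≠ y → x ∈ ({i,j,k} : Finset ℕ) → y ∈ ({i,j,k} : Finset ℕ) →
      ∀ z : ℕ, T ≠ {x, y, z} := by
    intro x y hxy hx hy z heq
    refine absurd ?_ (not_le.2 h)
    calc 2 = ({x, y} : Finset ℕ).card := (Finset.card_pair hxy).symm
    _ ≤ (T ∩ ({i,j,k} : Finset ℕ)).card := by
        apply Finset.card_le_card
        intro w hw
        simp only [Finset.mem_insert, Finset.mem_singleton] at hw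
        rcases hw with rfl | rfl <;>
          simp only [Finset.mem_inter, heq, Finset.mem_insert, Finset.mem_singleton] <;>
          simp_all
  funext l
  have h1 := key j k hjk (by simp) (by simp) l.1
  have h2 := key i j hij (by simp) (by simp) l.1
  have h3 := key i k hik (by simp) (by simp) l.1
  simp [shF, h1, h2, h3, Prod.ext_iff]

lemma gpF_low_inter {T : Finset ℕ} (hij : i ≠ j) (hik : i ≠ k) (hjk : j ≠ k)
    (h : (T ∩ ({i, j, k} : Finset ℕ)).card < 2) : gpF n i j k T = 1 := by
  have : T ≠ ({i,j,k} : Finset ℕ) := by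
    rintro rfl
    rw [Finset.inter_self, cardA hij hik hjk] at h
    omega
  simp [gpF, this]

lemma triple_swap (x y z : ℕ) : ({x, y, z} : Finset ℕ) = {y, x, z} := by
  ext t; simp only [Finset.mem_insert, Finset.mem_singleton]; tauto

set_option maxHeartbeats 1000000 in
lemma sum_canon {d : ℕ} (hij : i ≠ j) (hik : i ≠ k) (hjk : j ≠ k)
    (hdi : d ≠ i) (hdj : d ≠ j) (hdk : d ≠ k) :
    shF n i j k {i, j, d} + shF n i j k {i, k, d} + shF n i j k {j, k, d} = 0 := by
  funext l
  obtain ⟨-, hli, hlj, hlk⟩ := l.2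
  have t1 : ({i,j,d} : Finset ℕ) ≠ {j,k,l.1} := by rw [Ne, trip_eq_iff]; omega
  have t3 : ({i,j,d} : Finset ℕ) ≠ {i,k,l.1} := by rw [Ne, trip_eq_iff]; omega
  have t4 : ({i,k,d} : Finset ℕ) ≠ {j,k,l.1} := by rw [Ne, trip_eq_iff]; omega
  have t5 : ({i,k,d} : Finset ℕ) ≠ {i,j,l.1} := by rw [Ne, trip_eq_iff]; omega
  have t8 : ({j,k,d} : Finset ℕ) ≠ {i,j,l.1} := by rw [Ne, trip_eq_iff]; omega
  have t9 : ({j,k,d} : Finset ℕ) ≠ {i,k,l.1} := by rw [Ne, trip_eq_iff]; omega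
  have e2 : (({i,j,d} : Finset ℕ) = {i,j,l.1}) ↔ d = l.1 := by rw [trip_eq_iff]; omega
  have e6 : (({i,k,d} : Finset ℕ) = {i,k,l.1}) ↔ d = l.1 := by rw [trip_eq_iff]; omega
  have e7 : (({j,k,d} : Finset ℕ) = {j,k,l.1}) ↔ d = l.1 := by rw [trip_eq_iff]; omega
  by_cases hdl : d = l.1
  · simp only [shF, Pi.add_apply, Pi.zero_apply, if_neg t1, if_neg t3, if_neg t4,
      if_neg t5, if_neg t8, if_neg t9, if_pos (e2.2 hdl), if_pos (e6.2 hdl), if_pos (e7.2 hdl),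
      Prod.ext_iff, Prod.fst_add, Prod.snd_add, Prod.fst_zero, Prod.snd_zero]
    constructor <;> decide
  · simp only [shF, Pi.add_apply, Pi.zero_apply, if_neg t1, if_neg t3, if_neg t4,
      if_neg t5, if_neg t8, if_neg t9, if_neg (fun h => hdl (e2.1 h)),
      if_neg (fun h => hdl (e6.1 h)), if_neg (fun h => hdl (e7.1 h)),
      Prod.ext_iff, Prod.fst_add, Prod.snd_add, Prod.fst_zero, Prod.snd_zero]
    constructor <;> decide

set_option maxHeartbeats 1000000 in
lemma sum_others {a b c d : ℕ} (hij : i ≠ j) (hik : i ≠ k) (hjk : j ≠ k)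
    (hab : a ≠ b) (hac : a ≠ c) (hbc : b ≠ c) (hda : d ≠ a) (hdb : d ≠ b) (hdc : d ≠ c)
    (hA : ({a, b, c} : Finset ℕ) = {i, j, k}) :
    shF n i j k {a, b, d} + shF n i j k {a, c, d} + shF n i j k {b, c, d} = 0 := by
  rw [trip_eq_iff] at hA
  obtain ⟨ha, hb, hc, -, -, -⟩ := hA
  rcases ha with rfl | rfl | rfl
  · rcases hb with rfl | rfl | rfl
    · omega
    · rcases hc with rfl | rfl | rfl
      · omega
      · omega
      · exact sum_canon hij hik hjk hda hdb hdc
    · rcases hc with rfl | rfl | rfl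
      · omega
      · rw [triple_swap b c d, ← sum_canon (n := n) hij hik hjk hda hdc hdb]; abel
      · omega
  · rcases hb with rfl | rfl | rfl
    · rcases hc with rfl | rfl | rfl
      · omega
      · omega
      · rw [triple_swap a b d, ← sum_canon (n := n) hij hik hjk hdb hda hdc]; abel
    · omega
    · rcases hc with rfl | rfl | rfl
      · rw [triple_swap a c d, triple_swap b c d,
          ← sum_canon (n := n) hij hik hjk hdc hda hdb]; abel
      · omega
      · omega
  · rcases hb with rfl | rfl | rfl
    · rcases hc with rfl | rfl | rfl
      · omega
      · rw [triple_swap a b d, triple_swap a c d,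
          ← sum_canon (n := n) hij hik hjk hdb hdc hda]; abel
      · omega
    · rcases hc with rfl | rfl | rfl
      · rw [triple_swap a b d, triple_swap a c d, triple_swap b c d,
          ← sum_canon (n := n) hij hik hjk hdc hdb hda]; abel
      · omega
      · omega
    · omega

end Aux2
section Aux3

variable {n i j k : ℕ}

lemma Sg_eq_of {x y : Sg n i j k} (h : x + y = 0) : x = y := by
  have h2 : x + y + y = y := by rw [h, zero_add]
  rw [add_assoc, Sg_add_self, add_zero] at h2
  exact h2

lemma triple_swap23 (x y z : ℕ) : ({x, y, z} : Finset ℕ) = {x, z, y} := by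
  ext t; simp only [Finset.mem_insert, Finset.mem_singleton]; tauto

lemma actS_apply' (s : Multiplicative (Sg n i j k)) (x : F3 n i j k) :
    actS n i j k s x = trF s.toAdd x := rfl

lemma EM_sq (hij : i ≠ j) (hik : i ≠ k) (hjk : j ≠ k) (T : Finset ℕ) :
    EM n i j k T * EM n i j k T = 1 := by
  apply sdp_ext
  · by_cases hT : T = ({i, j, k} : Finset ℕ)
    · subst hT
      simp only [EM, SemidirectProduct.mul_left, SemidirectProduct.one_left, actS_apply',
        toAdd_ofAdd, shF_A hij hik hjk, trF_zero, MonoidHom.id_apply, gpF, if_pos rfl]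
      exact FP2_of_sq _
    · simp [EM, SemidirectProduct.mul_left, gpF, if_neg hT]
  · simp only [EM, SemidirectProduct.mul_right, SemidirectProduct.one_right]
    exact mulS_self n i j k _
end Aux3
section Aux4
variable {n i j k : ℕ}

lemma EM_comm (hij : i ≠ j) (hik : i ≠ k) (hjk : j ≠ k) {Ta Tb : Finset ℕ}
    (h : (Ta ∩ Tb).card < 2) : EM n i j k Ta * EM n i j k Tb = EM n i j k Tb * EM n i j k Ta := by
  have hA : ∀ T T' : Finset ℕ, T = ({i,j,k} : Finset ℕ) → (T ∩ T').card < 2 →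
      gpF n i j k T' = 1 ∧ shF n i j k T' = 0 := by
    intro T T' hT hc
    subst hT
    rw [Finset.inter_comm] at hc
    exact ⟨gpF_low_inter hij hik hjk hc, shF_low_inter hij hik hjk hc⟩
  apply sdp_ext
  · by_cases h1 : Ta = ({i,j,k} : Finset ℕ)
    · obtain ⟨hg, hs⟩ := hA Ta Tb h1 h
      simp only [EM, SemidirectProduct.mul_left, actS_apply', toAdd_ofAdd, hg, hs, map_one,
        mul_one, one_mul, trF_zero, MonoidHom.id_apply]
    · by_cases h2 : Tb = ({i,j,k} : Finset ℕ)
      · obtain ⟨hg, hs⟩ := hA Tb Ta h2 (by rw [Finset.inter_comm]; exact h)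
        simp only [EM, SemidirectProduct.mul_left, actS_apply', toAdd_ofAdd, hg, hs, map_one,
          mul_one, one_mul, trF_zero, MonoidHom.id_apply]
      · simp only [EM, SemidirectProduct.mul_left, gpF, if_neg h1, if_neg h2, map_one, mul_one,
          one_mul]
  · simp only [EM, SemidirectProduct.mul_right]
    exact mul_comm _ _

end Aux4
section Aux5
variable {n i j k : ℕ}

lemma EM_left (T : Finset ℕ) : (EM n i j k T).left = gpF n i j k T := rfl
lemma EM_right (T : Finset ℕ) : (EM n i j k T).right = Multiplicative.ofAdd (shF n i j k T) := rfl

set_option maxHeartbeats 1000000 in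
lemma EM_tetra (hij : i ≠ j) (hik : i ≠ k) (hjk : j ≠ k) {p q r s : ℕ}
    (hpq : p ≠ q) (hpr : p ≠ r) (hps : p ≠ s) (hqr : q ≠ r) (hqs : q ≠ s) (hrs : r ≠ s) :
    EM n i j k {p,q,r} * EM n i j k {p,q,s} * EM n i j k {p,r,s} * EM n i j k {q,r,s} =
    EM n i j k {q,r,s} * EM n i j k {p,r,s} * EM n i j k {p,q,s} * EM n i j k {p,q,r} := by
  apply sdp_ext
  case h2 =>
    simp only [SemidirectProduct.mul_right, EM_right, ← ofAdd_add]
    exact congrArg Multiplicative.ofAdd (by abel)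
  case h1 =>
    simp only [SemidirectProduct.mul_right, SemidirectProduct.mul_left, EM_left, EM_right,
      actS_apply', toAdd_mul, toAdd_ofAdd]
    by_cases h1 : ({p,q,r} : Finset ℕ) = ({i,j,k} : Finset ℕ)
    · have h2 : ({p,q,s} : Finset ℕ) ≠ ({i,j,k} : Finset ℕ) := by
        rw [← h1, Ne, trip_eq_iff]; omega
      have h3 : ({p,r,s} : Finset ℕ) ≠ ({i,j,k} : Finset ℕ) := by
        rw [← h1, Ne, trip_eq_iff]; omega
      have h4 : ({q,r,s} : Finset ℕ) ≠ ({i,j,k} : Finset ℕ) := by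
        rw [← h1, Ne, trip_eq_iff]; omega
      have Hsum := sum_others (n := n) hij hik hjk hpq hpr hqr hps.symm hqs.symm hrs.symm h1
      simp only [gpF, if_pos h1, if_neg h2, if_neg h3, if_neg h4, map_one, mul_one,
        one_mul, trF_of]
      exact congrArg PresentedGroup.of (Sg_eq_of (by simp only [add_zero, zero_add]; rw [← Hsum]; try abel))
    · by_cases h2 : ({p,q,s} : Finset ℕ) = ({i,j,k} : Finset ℕ)
      · have h3 : ({p,r,s} : Finset ℕ) ≠ ({i,j,k} : Finset ℕ) := by
          rw [← h2, Ne, trip_eq_iff]; omega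
        have h4 : ({q,r,s} : Finset ℕ) ≠ ({i,j,k} : Finset ℕ) := by
          rw [← h2, Ne, trip_eq_iff]; omega
        have Hsum := sum_others (n := n) hij hik hjk hpq hps hqs hpr.symm hqr.symm hrs h2
        rw [congrArg (shF n i j k) (triple_swap23 p s r),
          congrArg (shF n i j k) (triple_swap23 q s r)] at Hsum
        simp only [gpF, if_pos h2, if_neg h1, if_neg h3, if_neg h4, map_one, mul_one,
          one_mul, trF_of]
        exact congrArg PresentedGroup.of (Sg_eq_of (by simp only [add_zero, zero_add]; rw [← Hsum]; try abel))
      · by_cases h3 : ({p,r,s} : Finset ℕ) = ({i,j,k} : Finset ℕ)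
        · have h4 : ({q,r,s} : Finset ℕ) ≠ ({i,j,k} : Finset ℕ) := by
            rw [← h3, Ne, trip_eq_iff]; omega
          have Hsum := sum_others (n := n) hij hik hjk hpr hps hrs hpq.symm hqr hqs h3
          rw [congrArg (shF n i j k) (triple_swap23 p r q),
            congrArg (shF n i j k) (triple_swap23 p s q),
            congrArg (shF n i j k) (triple_swap23 r s q),
            congrArg (shF n i j k) (triple_swap r q s)] at Hsum
          simp only [gpF, if_pos h3, if_neg h1, if_neg h2, if_neg h4, map_one, mul_one,
            one_mul, trF_of]
          exact congrArg PresentedGroup.of (Sg_eq_of (by simp only [add_zero, zero_add]; rw [← Hsum]; try abel))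
        · by_cases h4 : ({q,r,s} : Finset ℕ) = ({i,j,k} : Finset ℕ)
          · have Hsum := sum_others (n := n) hij hik hjk hqr hqs hrs hpq hpr hps h4
            rw [congrArg (shF n i j k) (triple_swap23 q r p),
              congrArg (shF n i j k) (triple_swap q p r),
              congrArg (shF n i j k) (triple_swap23 q s p),
              congrArg (shF n i j k) (triple_swap q p s),
              congrArg (shF n i j k) (triple_swap23 r s p),
              congrArg (shF n i j k) (triple_swap r p s)] at Hsum
            simp only [gpF, if_pos h4, if_neg h1, if_neg h2, if_neg h3, map_one, mul_one,
              one_mul, trF_of]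
            exact congrArg PresentedGroup.of (Sg_eq_of (by simp only [add_zero, zero_add]; rw [← Hsum]; try abel))
          · simp only [gpF, if_neg h1, if_neg h2, if_neg h3, if_neg h4, map_one, mul_one,
              one_mul]

end Aux5

section Aux6
variable {n i j k : ℕ}

lemma sort3_ok {a b c : ℕ} (h1 : 1 ≤ a) (h2 : a ≤ n) (h3 : 1 ≤ b) (h4 : b ≤ n)
    (h5 : 1 ≤ c) (h6 : c ≤ n) (hab : a ≠ b) (hac : a ≠ c) (hbc : b ≠ c) :
    T3ok n (sort3 a b c) := by
  simp only [T3ok, sort3]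
  omega

lemma tripSet_sort3 {a b c : ℕ} (h : T3ok n (sort3 a b c)) :
    tripSet (⟨sort3 a b c, h⟩ : TIdx n) = {a, b, c} := by
  simp only [tripSet, sort3]
  ext x
  simp only [Finset.mem_insert, Finset.mem_singleton]
  omega

/-- The homomorphism `Φ : G3 n → MM`. -/
def PhiF (n i j k : ℕ) (hij : i ≠ j) (hik : i ≠ k) (hjk : j ≠ k) : G3 n →* MM n i j k :=
  PresentedGroup.toGroup (f := fun t => EM n i j k (tripSet t)) (by
    rintro r ((⟨a, rfl⟩ | ⟨a, b, hcard, rfl⟩) | ⟨p, q, r', s', hp1, hpn, hq1, hqn, hr1, hrn,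
      hs1, hsn, hpq, hpr, hps, hqr, hqs, hrs, rfl⟩)
    · simp only [map_mul, FreeGroup.lift_apply_of]
      exact EM_sq hij hik hjk _
    · simp only [map_mul, map_inv, FreeGroup.lift_apply_of]
      rw [show ∀ x y : MM n i j k, x * y * x⁻¹ * y⁻¹ = (open scoped commutatorElement in ⁅x, y⁆) from fun _ _ => rfl,
        commutatorElement_eq_one_iff_commute]
      exact EM_comm hij hik hjk hcard
    · have L : ∀ (a b c : ℕ), 1 ≤ a → a ≤ n → 1 ≤ b → b ≤ n → 1 ≤ c → c ≤ n →
          a ≠ b → a ≠ c → b ≠ c →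
          FreeGroup.lift (fun t => EM n i j k (tripSet t)) (fgen3 n a b c) =
            EM n i j k {a, b, c} := by
        intro a b c ha1 han hb1 hbn hc1 hcn hab hac hbc
        rw [fgen3, dif_pos (sort3_ok ha1 han hb1 hbn hc1 hcn hab hac hbc), FreeGroup.lift_apply_of,
          tripSet_sort3]
      simp only [map_mul, map_inv,
        L p q r' hp1 hpn hq1 hqn hr1 hrn hpq hpr hqr,
        L p q s' hp1 hpn hq1 hqn hs1 hsn hpq hps hqs,
        L p r' s' hp1 hpn hr1 hrn hs1 hsn hpr hps hrs,
        L q r' s' hq1 hqn hr1 hrn hs1 hsn hqr hqs hrs]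
      rw [mul_inv_eq_one]
      exact EM_tetra hij hik hjk hpq hpr hps hqr hqs hrs)

lemma PhiF_of (hij : i ≠ j) (hik : i ≠ k) (hjk : j ≠ k) (t : TIdx n) :
    PhiF n i j k hij hik hjk (PresentedGroup.of t) = EM n i j k (tripSet t) :=
  PresentedGroup.toGroup.of _

end Aux6

section Aux7
variable {n i j k : ℕ}

lemma iC3_nil : iC3 i j k ([] : List (TIdx n)) = (0 : Sg n i j k) := by
  funext l
  simp [iC3, cnt3]

lemma cnt3_cons (t : TIdx n) (pre : List (TIdx n)) (a b c : ℕ) :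
    cnt3 (t :: pre) a b c = (if tripSet t = ({a,b,c} : Finset ℕ) then 1 else 0) + cnt3 pre a b c := by
  by_cases h : tripSet t = ({a,b,c} : Finset ℕ) <;>
    simp [cnt3, List.filter_cons, h] <;> omega

lemma iC3_cons (t : TIdx n) (pre : List (TIdx n)) :
    iC3 i j k (t :: pre) = shF n i j k (tripSet t) + iC3 i j k pre := by
  funext l
  simp only [iC3, Pi.add_apply, shF, cnt3_cons, Nat.cast_add, Prod.mk_add_mk, Prod.mk.injEq]
  constructor <;> · push_cast; split_ifs <;> ring

lemma w3_cons (t : TIdx n) (γ : List (TIdx n)) :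
    w3 i j k (t :: γ) =
      gpF n i j k (tripSet t) * trF (shF n i j k (tripSet t)) (w3 i j k γ) := by
  have hmap : (γ.zipIdx (0 + 1)).map Prod.swap =
      (γ.zipIdx.map Prod.swap).map (Prod.map (· + 1) id) := by
    rw [List.zipIdx_succ, List.map_map, List.map_map]; rfl
  have hcomp : ((fun x : ℕ × TIdx n => decide (tripSet x.2 = ({i,j,k} : Finset ℕ))) ∘
      (Prod.map (· + 1) id)) = fun x : ℕ × TIdx n => decide (tripSet x.2 = ({i,j,k} : Finset ℕ)) :=
    rfl
  have hRHS : trF (shF n i j k (tripSet t)) (w3 i j k γ) =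
      (((γ.zipIdx.map Prod.swap).filter fun x => decide (tripSet x.2 = ({i,j,k} : Finset ℕ))).map
        fun x => (PresentedGroup.of (shF n i j k (tripSet t) + iC3 i j k (γ.take x.1)) :
          F3 n i j k)).prod := by
    rw [w3, map_list_prod, List.map_map]
    simp only [Function.comp_def, trF_of]
  rw [w3, List.zipIdx_cons, List.map_cons, hmap, List.filter_cons, hRHS]
  by_cases ht : tripSet t = ({i,j,k} : Finset ℕ)
  · rw [if_pos (by simpa using ht)]
    rw [List.map_cons, List.prod_cons, List.filter_map, hcomp, List.map_map]
    have : ((fun x : ℕ × TIdx n =>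
        (PresentedGroup.of (iC3 i j k ((t :: γ).take x.1)) : F3 n i j k)) ∘
        (Prod.map (· + 1) id)) = fun x : ℕ × TIdx n =>
        (PresentedGroup.of (shF n i j k (tripSet t) + iC3 i j k (γ.take x.1)) : F3 n i j k) := by
      funext x
      show (PresentedGroup.of (iC3 i j k ((t :: γ).take (x.1 + 1))) : F3 n i j k) = _
      rw [List.take_succ_cons, iC3_cons]
    rw [this, gpF, if_pos ht]
    show (PresentedGroup.of (iC3 i j k []) : F3 n i j k) * _ = _
    rw [iC3_nil]
  · rw [if_neg (by simpa using ht)]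
    rw [List.filter_map, hcomp, List.map_map]
    have : ((fun x : ℕ × TIdx n =>
        (PresentedGroup.of (iC3 i j k ((t :: γ).take x.1)) : F3 n i j k)) ∘
        (Prod.map (· + 1) id)) = fun x : ℕ × TIdx n =>
        (PresentedGroup.of (shF n i j k (tripSet t) + iC3 i j k (γ.take x.1)) : F3 n i j k) := by
      funext x
      show (PresentedGroup.of (iC3 i j k ((t :: γ).take (x.1 + 1))) : F3 n i j k) = _
      rw [List.take_succ_cons, iC3_cons]
    rw [this, gpF, if_neg ht, one_mul]

lemma PhiF_toG3 (hij : i ≠ j) (hik : i ≠ k) (hjk : j ≠ k) (γ : List (TIdx n)) :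
    (PhiF n i j k hij hik hjk (toG3 γ)).left = w3 i j k γ := by
  induction γ with
  | nil =>
    show (PhiF n i j k hij hik hjk (toG3 [])).left = w3 i j k []
    rw [toG3]
    simp only [List.map_nil, List.prod_nil, map_one, SemidirectProduct.one_left]
    rw [w3]
    simp [List.zipIdx]
  | cons t γ ih =>
    have h1 : toG3 (t :: γ) = PresentedGroup.of t * toG3 γ := by
      rw [toG3, toG3, List.map_cons, List.prod_cons]
    rw [h1, map_mul, SemidirectProduct.mul_left, PhiF_of, EM_left, EM_right, actS_apply',
      toAdd_ofAdd, ih, w3_cons]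

end Aux7
section Aux8
variable {n i j k : ℕ}

lemma inv_prod_rev {G : Type*} [Group G] (l : List ℕ) (g : ℕ → G) :
    ((l.map fun x => (g x)⁻¹).prod) * ((l.reverse.map g).prod) = 1 := by
  induction l with
  | nil => simp
  | cons a t ih =>
    rw [List.reverse_cons, List.map_append, List.prod_append, List.map_cons, List.prod_cons]
    rw [eq_inv_of_mul_eq_one_left ih]
    simp [mul_assoc]

lemma EM_eq_inr {T : Finset ℕ} (hT : T ≠ ({i,j,k} : Finset ℕ)) :
    EM n i j k T = SemidirectProduct.inr (Multiplicative.ofAdd (shF n i j k T)) := by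
  apply sdp_ext
  · rw [EM_left, gpF, if_neg hT, SemidirectProduct.left_inr]
  · rfl

lemma Phi_ggen3_inr (hij : i ≠ j) (hik : i ≠ k) (hjk : j ≠ k) {m a b c : ℕ}
    (hm : m = a ∨ m = b ∨ m = c) (hmi : m ≠ i) (hmj : m ≠ j) (hmk : m ≠ k) :
    ∃ s, PhiF n i j k hij hik hjk (ggen3 n a b c) = SemidirectProduct.inr s := by
  rw [ggen3]
  split_ifs with h
  · refine ⟨Multiplicative.ofAdd (shF n i j k {a,b,c}), ?_⟩
    rw [PhiF_of, tripSet_sort3 h]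
    apply EM_eq_inr
    intro heq
    have : m ∈ ({i,j,k} : Finset ℕ) := by
      rw [← heq]
      simp only [Finset.mem_insert, Finset.mem_singleton]
      tauto
    simp only [Finset.mem_insert, Finset.mem_singleton] at this
    tauto
  · exact ⟨1, by rw [map_one, map_one]⟩

lemma prod_inr_list (hij : i ≠ j) (hik : i ≠ k) (hjk : j ≠ k) (l : List ℕ) (g : ℕ → G3 n)
    (h : ∀ x ∈ l, ∃ s, PhiF n i j k hij hik hjk (g x) = SemidirectProduct.inr s) :
    ∃ s, PhiF n i j k hij hik hjk ((l.map g).prod) = SemidirectProduct.inr s := by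
  induction l with
  | nil => exact ⟨1, by simp⟩
  | cons a t ih =>
    obtain ⟨s1, hs1⟩ := h a (by simp)
    obtain ⟨s2, hs2⟩ := ih (fun x hx => h x (by simp [hx]))
    exact ⟨s1 * s2, by rw [List.map_cons, List.prod_cons, map_mul, hs1, hs2, map_mul]⟩

lemma Phi_cElt_inr (hij : i ≠ j) (hik : i ≠ k) (hjk : j ≠ k) {m a b : ℕ}
    (hm : m = a ∨ m = b) (hmi : m ≠ i) (hmj : m ≠ j) (hmk : m ≠ k) :
    ∃ s, PhiF n i j k hij hik hjk (cElt n a b) = SemidirectProduct.inr s := by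
  rw [cElt]
  obtain ⟨s1, hs1⟩ := prod_inr_list hij hik hjk (List.range' (b+1) (n-b)) (fun c => ggen3 n a b c)
    (fun x _ => Phi_ggen3_inr hij hik hjk (by tauto) hmi hmj hmk)
  obtain ⟨s2, hs2⟩ := prod_inr_list hij hik hjk (List.range' 1 (b-1)) (fun c => ggen3 n a b c)
    (fun x _ => Phi_ggen3_inr hij hik hjk (by tauto) hmi hmj hmk)
  exact ⟨s1 * s2, by rw [map_mul, hs1, hs2, map_mul]⟩

lemma Phi_phiElt_one (hij : i ≠ j) (hik : i ≠ k) (hjk : j ≠ k) {m a b : ℕ}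
    (hm : m = a ∨ m = b) (hmi : m ≠ i) (hmj : m ≠ j) (hmk : m ≠ k) :
    PhiF n i j k hij hik hjk (phiElt n a b) = 1 := by
  obtain ⟨s, hs⟩ := Phi_cElt_inr hij hik hjk hm hmi hmj hmk
  have hC2 : (PhiF n i j k hij hik hjk (cElt n a b)) ^ 2 = 1 := by
    rw [hs, ← map_pow, pow_two, mulS_self, map_one]
  have hLR : (((List.range' (a + 1) (b - 1 - a)).map fun m' => (cElt n a m')⁻¹).prod) *
      (((List.range' (a + 1) (b - 1 - a)).reverse.map fun m' => cElt n a m').prod) = 1 :=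
    inv_prod_rev _ (cElt n a)
  rw [phiElt, map_mul, map_mul, map_pow, hC2, mul_one, ← map_mul, hLR, map_one]

end Aux8

section Aux9
variable {n : ℕ}

/-- Inverse of `del m`: indices `≥ m` are increased by one. -/
def uu (m x : ℕ) : ℕ := if x < m then x else x + 1

lemma uu_del {m x : ℕ} (h : m ≠ x) : uu m (del m x) = x := by
  unfold uu del; split_ifs <;> omega

lemma sort2_eq {a b : ℕ} (h : a ≤ b) : sort2 a b = (a, b) := by
  simp [sort2, min_eq_left h, max_eq_right h]

lemma pbgen_eq_of {a b : ℕ} (h : P2ok n (a, b)) :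
    pbgen n a b = PresentedGroup.of (⟨(a,b), h⟩ : PIdx n) := by
  have hs : sort2 a b = (a, b) := sort2_eq (le_of_lt h.2.1)
  simp only [pbgen, hs, dif_pos h]

lemma mk_fgen2 {a b : ℕ} (h1 : 1 ≤ a) (h2 : a < b) (h3 : b ≤ n) :
    PresentedGroup.mk (relsPB n) (fgen2 n a b) = pbgen n a b := by
  have h : P2ok n (a, b) := ⟨h1, h2, h3⟩
  have hs : sort2 a b = (a, b) := sort2_eq (le_of_lt h2)
  simp only [fgen2, hs, dif_pos h]
  rw [pbgen_eq_of h]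
  rfl

lemma relsPB_one {r : FreeGroup (PIdx n)} (h : r ∈ relsPB n) :
    PresentedGroup.mk (relsPB n) r = 1 :=
  (QuotientGroup.eq_one_iff _).2 (Subgroup.subset_normalClosure h)

/-- The section `PB (n-1) → PB n` induced by `uu m`. -/
def chi0 (n m : ℕ) (hn : 1 ≤ n) : PB (n - 1) →* PB n :=
  PresentedGroup.toGroup
    (f := fun p => pbgen n (uu m p.1.1) (uu m p.1.2)) (by
    have hu : ∀ x y : ℕ, x < y → uu m x < uu m y := by intro x y h; unfold uu; split_ifs <;> omega
    have hu1 : ∀ x : ℕ, 1 ≤ x → 1 ≤ uu m x := by intro x h; unfold uu; split_ifs <;> omega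
    have hun : ∀ x : ℕ, x ≤ n - 1 → uu m x ≤ n := by
      intro x h; unfold uu; split_ifs <;> omega
    have L : ∀ a b : ℕ, 1 ≤ a → a < b → b ≤ n - 1 →
        FreeGroup.lift (fun p : PIdx (n-1) => pbgen n (uu m p.1.1) (uu m p.1.2))
          (fgen2 (n-1) a b) = PresentedGroup.mk (relsPB n) (fgen2 n (uu m a) (uu m b)) := by
      intro a b ha hab hb
      have h' : P2ok (n-1) (a, b) := ⟨ha, hab, hb⟩
      have hs : sort2 a b = (a, b) := sort2_eq (le_of_lt hab)
      have hL : FreeGroup.lift (fun p : PIdx (n-1) => pbgen n (uu m p.1.1) (uu m p.1.2))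
          (fgen2 (n-1) a b) = pbgen n (uu m a) (uu m b) := by
        simp only [fgen2, hs, dif_pos h', FreeGroup.lift_apply_of]
      rw [hL, mk_fgen2 (hu1 a ha) (hu a b hab) (hun b hb)]
    rintro r (((⟨a, b, c, d, h1, h2, h3, rfl⟩ | ⟨a, b, c, h1, h2, h3, h4, rfl⟩) |
      ⟨a, b, c, h1, h2, h3, h4, rfl⟩) | ⟨a, b, c, d, h1, h2, h3, h4, h5, rfl⟩)
    · obtain ⟨ha1, hab, hbn⟩ := h1
      obtain ⟨hc1, hcd, hdn⟩ := h2
      have hcond : (uu m b < uu m c ∨ (uu m c < uu m a ∧ uu m b < uu m d)) := by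
        rcases h3 with h | ⟨h3a, h3b⟩
        · exact Or.inl (hu b c h)
        · exact Or.inr ⟨hu c a h3a, hu b d h3b⟩
      have W := relsPB_one (n := n) (Or.inl (Or.inl (Or.inl
        ⟨uu m a, uu m b, uu m c, uu m d, ⟨hu1 a ha1, hu a b hab, hun b hbn⟩,
          ⟨hu1 c hc1, hu c d hcd, hun d hdn⟩, hcond, rfl⟩)))
      simp only [map_mul, map_inv, L a b ha1 hab hbn, L c d hc1 hcd hdn] at W ⊢
      exact W
    · have W := relsPB_one (n := n) (Or.inl (Or.inl (Or.inr
        ⟨uu m a, uu m b, uu m c, hu1 a h1, hu a b h2, hu b c h3, hun c h4, rfl⟩)))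
      simp only [map_mul, map_inv, L a b h1 h2 (by omega), L b c (by omega) h3 h4,
        L a c h1 (by omega) h4] at W ⊢
      exact W
    · have W := relsPB_one (n := n) (Or.inl (Or.inr
        ⟨uu m a, uu m b, uu m c, hu1 a h1, hu a b h2, hu b c h3, hun c h4, rfl⟩))
      simp only [map_mul, map_inv, L a b h1 h2 (by omega), L b c (by omega) h3 h4,
        L a c h1 (by omega) h4] at W ⊢
      exact W
    · have W := relsPB_one (n := n) (Or.inr
        ⟨uu m a, uu m b, uu m c, uu m d, hu1 a h1, hu a b h2, hu b c h3, hu c d h4, hun d h5, rfl⟩)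
      simp only [map_mul, map_inv, L a c h1 (by omega) (by omega), L b d (by omega) (by omega) h5,
        L a d h1 (by omega) h5, L c d (by omega) h4 h5] at W ⊢
      exact W)

lemma chi0_pbgen (m : ℕ) (hn : 1 ≤ n) {a b : ℕ} (h : P2ok (n-1) (a, b)) :
    chi0 n m hn (pbgen (n-1) a b) = pbgen n (uu m a) (uu m b) := by
  rw [pbgen_eq_of h, chi0, PresentedGroup.toGroup.of]

end Aux9


theorem statement_9 (n : ℕ) (hn : 4 ≤ n)
    (p : ℕ → (PB n →* PB (n - 1))) (hp : ∀ m, 1 ≤ m → m ≤ n → IsShiftPB n m (p m))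
    (φ : PB n →* G3 n) (hφ : IsPhi n φ)
    (β : PB n) (hβ : ∀ m, 1 ≤ m → m ≤ n → p m β = 1)
    (i j k : ℕ) (hi : 1 ≤ i ∧ i ≤ n) (hj : 1 ≤ j ∧ j ≤ n) (hk : 1 ≤ k ∧ k ≤ n)
    (hij : i ≠ j) (hik : i ≠ k) (hjk : j ≠ k)
    (γ : List (TIdx n)) (hγg : good3 γ) (hγ : toG3 γ = φ β) :
    w3 i j k γ = 1 := by
  have hmex : ∃ m, 1 ≤ m ∧ m ≤ n ∧ m ≠ i ∧ m ≠ j ∧ m ≠ k := by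
    by_cases h1 : i ≠ 1 ∧ j ≠ 1 ∧ k ≠ 1
    · exact ⟨1, by omega, by omega, by omega, by omega, by omega⟩
    · by_cases h2 : i ≠ 2 ∧ j ≠ 2 ∧ k ≠ 2
      · exact ⟨2, by omega, by omega, by omega, by omega, by omega⟩
      · by_cases h3 : i ≠ 3 ∧ j ≠ 3 ∧ k ≠ 3
        · exact ⟨3, by omega, by omega, by omega, by omega, by omega⟩
        · exact ⟨4, by omega, by omega, by omega, by omega, by omega⟩
  obtain ⟨m, hm1, hmn, hmi, hmj, hmk⟩ := hmex
  have hn1 : 1 ≤ n := by omega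
  have key : ((PhiF n i j k hij hik hjk).comp φ) =
      (((PhiF n i j k hij hik hjk).comp φ).comp (chi0 n m hn1)).comp (p m) := by
    apply PresentedGroup.ext
    rintro ⟨⟨a, b⟩, hx⟩
    simp only [MonoidHom.comp_apply]
    rw [show (PresentedGroup.of ⟨(a,b),hx⟩ : PB n) = pbgen n a b from (pbgen_eq_of hx).symm]
    obtain ⟨ha1, hab, hbn⟩ := hx
    rw [hp m hm1 hmn a b ha1 hab hbn]
    by_cases hm : m = a ∨ m = b
    · rw [if_pos hm, map_one, map_one, hφ a b ha1 hab hbn]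
      exact Phi_phiElt_one hij hik hjk hm hmi hmj hmk
    · rw [if_neg hm]
      push_neg at hm
      have hdel : P2ok (n-1) (del m a, del m b) := by
        simp only [P2ok, del]
        split_ifs <;> omega
      rw [chi0_pbgen m hn1 hdel, uu_del hm.1, uu_del hm.2]
  calc w3 i j k γ = ((PhiF n i j k hij hik hjk) (toG3 γ)).left :=
        (PhiF_toG3 hij hik hjk γ).symm
  _ = (((PhiF n i j k hij hik hjk).comp φ) β).left := by rw [hγ]; rfl
  _ = 1 := by
      rw [key]
      simp only [MonoidHom.comp_apply]
      rw [hβ m hm1 hmn, map_one, map_one, map_one]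
      rfl


end GnkBrunnian
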